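/- Let A_1, …, A_k be finite abelian groups and suppose the multilinear map φ : A_1 × ⋯ × A_k → ℝ/ℤ is the sum of multilinear maps φ_1, …, φ_r where for each i the map φ_i factors through m_{q_i} for some prime power q_i. Then bias(φ) ≥ q_1^{-1} q_2^{-1} ⋯ q_r^{-1}. -/

import Mathlib

open scoped ComplexOrder

/-- A map of (dependent) products of abelian groups is multiadditive (multilinear over ℤ)
if it is additive in each coordinate separately. -/
def IsMultiadditive {ι : Type} [DecidableEq ι] {A : ι → Type} [∀ i, AddCommGroup (A i)]
    {B : Type} [AddCommMonoid B] (φ : (∀ i, A i) → B) : Prop :=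
  ∀ (i : ι) (x : ∀ j, A j) (a b : A i),
    φ (Function.update x i (a + b)) = φ (Function.update x i a) + φ (Function.update x i b)

/-- The standard character `e(x) = exp(2πix)` of `ℝ/ℤ`. -/
noncomputable def eChar (x : AddCircle (1 : ℝ)) : ℂ := AddCircle.toCircle x

/-- The bias of a map `A_1 × ⋯ × A_k → ℝ/ℤ`. -/
noncomputable def bias {ι : Type} [Fintype ι] [DecidableEq ι] {A : ι → Type}
    [∀ i, Fintype (A i)] (φ : (∀ i, A i) → AddCircle (1 : ℝ)) : ℂ :=
  (∑ x : ∀ i, A i, eChar (φ x)) / (Fintype.card (∀ i, A i) : ℂ)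

/-- The bilinear map `m_q : ℤ/q × ℤ/q → ℝ/ℤ`, `(x, y) ↦ xy/q mod 1`. -/
noncomputable def mq (q : ℕ) (x y : ZMod q) : AddCircle (1 : ℝ) :=
  (((x.val * y.val : ℕ) : ℝ) / q : ℝ)

/-- A multilinear map `φ : A_1 × ⋯ × A_k → ℝ/ℤ` factors through `m_q` if
`φ(x) = m_q(φ₁(x_I), φ₂(x_{I^c}))` for some `I` with `0 < |I| < k` and multilinear `φ₁, φ₂`. -/
def FactorsThroughMq {ι : Type} [Fintype ι] [DecidableEq ι] {A : ι → Type}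
    [∀ i, AddCommGroup (A i)] (q : ℕ) (φ : (∀ i, A i) → AddCircle (1 : ℝ)) : Prop :=
  ∃ I : Finset ι, I.Nonempty ∧ I ≠ Finset.univ ∧
    ∃ (φ₁ : (∀ i : I, A i) → ZMod q) (φ₂ : (∀ i : (Iᶜ : Finset ι), A i) → ZMod q),
      IsMultiadditive φ₁ ∧ IsMultiadditive φ₂ ∧
      ∀ x : ∀ i, A i, φ x = mq q (φ₁ (fun i => x i)) (φ₂ (fun i => x i))

/-! ### auxiliary lemmas -/

lemma eChar_zero : eChar 0 = 1 := by
  simp [eChar]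

lemma eChar_add (a b : AddCircle (1:ℝ)) : eChar (a + b) = eChar a * eChar b := by
  simp [eChar, AddCircle.toCircle_add]

lemma eChar_ne_one {a : AddCircle (1:ℝ)} (h : a ≠ 0) : eChar a ≠ 1 := by
  intro hc
  refine h (AddCircle.injective_toCircle one_ne_zero (?_ : a.toCircle = AddCircle.toCircle 0))
  exact Subtype.ext (by simpa [eChar, AddCircle.toCircle_zero] using hc)

/-- cancellation of a positive real factor in a `ℂ` inequality -/
lemma le_of_cmul_le {a b : ℂ} {m : ℝ} (hm : 0 < m) (h : (m:ℂ) * a ≤ (m:ℂ) * b) : a ≤ b := by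
  have h2 : ((m⁻¹:ℝ):ℂ) * ((m:ℂ) * a) ≤ ((m⁻¹:ℝ):ℂ) * ((m:ℂ) * b) :=
    mul_le_mul_of_nonneg_left h (by exact_mod_cast (inv_nonneg.mpr hm.le))
  have e : ∀ z : ℂ, ((m⁻¹:ℝ):ℂ) * ((m:ℂ) * z) = z := by
    intro z; push_cast; field_simp
  rwa [e a, e b] at h2

section CharSums

variable {G : Type} [AddCommGroup G] [Fintype G]

lemma sum_eChar_all_zero (f : G → AddCircle (1:ℝ)) (h : ∀ a, f a = 0) :
    ∑ a, eChar (f a) = (Fintype.card G : ℂ) := by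
  simp [fun a => h a, eChar_zero]

lemma sum_eChar_eq_zero (f : G → AddCircle (1:ℝ))
    (hf : ∀ a b, f (a + b) = f a + f b) (h : ∃ a, f a ≠ 0) :
    ∑ a, eChar (f a) = 0 := by
  obtain ⟨a₀, ha₀⟩ := h
  have key : eChar (f a₀) * ∑ a, eChar (f a) = ∑ a, eChar (f a) := by
    rw [Finset.mul_sum]
    have : ∀ a, eChar (f a₀) * eChar (f a) = eChar (f (a₀ + a)) := by
      intro a; rw [hf, eChar_add]
    simp_rw [this]
    exact Fintype.sum_equiv (Equiv.addLeft a₀) _ _ (fun a => rfl)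
  have : (eChar (f a₀) - 1) * ∑ a, eChar (f a) = 0 := by linear_combination key
  rcases mul_eq_zero.mp this with h1 | h2
  · exact absurd (by linear_combination h1) (eChar_ne_one ha₀)
  · exact h2

lemma sum_eChar_cases (f : G → AddCircle (1:ℝ)) (hf : ∀ a b, f (a + b) = f a + f b) :
    (∀ a, f a = 0) ∧ ∑ a, eChar (f a) = (Fintype.card G : ℂ)
    ∨ (¬ ∀ a, f a = 0) ∧ ∑ a, eChar (f a) = 0 := by
  by_cases h : ∀ a, f a = 0
  · exact Or.inl ⟨h, sum_eChar_all_zero f h⟩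
  · exact Or.inr ⟨h, sum_eChar_eq_zero f hf (by push_neg at h; exact h)⟩

lemma sum_eChar_nonneg (f : G → AddCircle (1:ℝ)) (hf : ∀ a b, f (a + b) = f a + f b) :
    (0:ℂ) ≤ ∑ a, eChar (f a) := by
  rcases sum_eChar_cases f hf with ⟨_, h⟩ | ⟨_, h⟩ <;> rw [h]
  exact_mod_cast Nat.cast_nonneg _

end CharSums

section Pi

variable {ι : Type} [Fintype ι] [DecidableEq ι] {A : ι → Type}
  [∀ i, AddCommGroup (A i)] [∀ i, Fintype (A i)]

lemma update_eq_piSplit (i : ι) (x : ∀ j, A j) (a : A i) :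
    Function.update x i a = (Equiv.piSplitAt i A).symm (a, fun j => x j) := by
  funext j
  simp only [Equiv.piSplitAt_symm_apply, Function.update]

/-- splitting off one coordinate from a sum -/
lemma sum_update (i : ι) (F : (∀ j, A j) → ℂ) :
    ∑ x : ∀ j, A j, ∑ a : A i, F (Function.update x i a)
      = (Fintype.card (A i) : ℂ) * ∑ x : ∀ j, A j, F x := by
  classical
  set e := Equiv.piSplitAt i A with he
  calc ∑ x : ∀ j, A j, ∑ a : A i, F (Function.update x i a)
      = ∑ x : ∀ j, A j, (fun p : A i × (∀ j : {j // j ≠ i}, A j) => ∑ a : A i, F (e.symm (a, p.2))) (e x) := by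
        refine Finset.sum_congr rfl fun x _ => ?_
        simp only [he, Equiv.piSplitAt_apply]
        exact Finset.sum_congr rfl fun a _ => by rw [update_eq_piSplit]
    _ = ∑ p : A i × (∀ j : {j // j ≠ i}, A j), ∑ a : A i, F (e.symm (a, p.2)) := by
        exact Equiv.sum_comp e (fun p => ∑ a : A i, F (e.symm (a, p.2)))
    _ = ∑ b : A i, ∑ w : ∀ j : {j // j ≠ i}, A j, ∑ a : A i, F (e.symm (a, w)) := by
        exact Fintype.sum_prod_type (f := fun p => ∑ a : A i, F (e.symm (a, p.2)))
    _ = ∑ b : A i, ∑ a : A i, ∑ w : ∀ j : {j // j ≠ i}, A j, F (e.symm (a, w)) := by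
        refine Finset.sum_congr rfl fun b _ => Finset.sum_comm
    _ = (Fintype.card (A i) : ℂ) * ∑ a : A i, ∑ w : ∀ j : {j // j ≠ i}, A j, F (e.symm (a, w)) := by
        rw [Finset.sum_const, nsmul_eq_mul, Fintype.card]
    _ = (Fintype.card (A i) : ℂ) * ∑ p : A i × (∀ j : {j // j ≠ i}, A j), F (e.symm p) := by
        rw [Fintype.sum_prod_type]
    _ = (Fintype.card (A i) : ℂ) * ∑ x : ∀ j, A j, F x := by
        rw [Equiv.sum_comp e.symm F]

def mrg (s : Finset ι) (x u : ∀ i, A i) : ∀ i, A i := fun i => if i ∈ s then x i else u i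

lemma mrg_univ (x u : ∀ i, A i) : mrg Finset.univ x u = x := by
  funext i; simp [mrg]

lemma mrg_empty (x u : ∀ i, A i) : mrg ∅ x u = u := by
  funext i; simp [mrg]

lemma mrg_update_left {s : Finset ι} {i : ι} (hi : i ∈ s) (x u : ∀ j, A j) (a : A i) :
    mrg s (Function.update x i a) u = Function.update (mrg s x u) i a := by
  funext j
  rcases eq_or_ne j i with rfl | hj
  · simp [mrg, hi]
  · simp [mrg, Function.update_of_ne hj]

lemma mrg_update_right {s : Finset ι} {i : ι} (hi : i ∉ s) (x u : ∀ j, A j) (a : A i) :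
    mrg s x (Function.update u i a) = Function.update (mrg s x u) i a := by
  funext j
  rcases eq_or_ne j i with rfl | hj
  · simp [mrg, hi]
  · simp [mrg, Function.update_of_ne hj]

lemma update_mrg_erase {s : Finset ι} {i : ι} (hi : i ∈ s) (x u : ∀ j, A j) (a : A i) :
    Function.update (mrg (s.erase i) x u) i a = Function.update (mrg s x u) i a := by
  funext j
  rcases eq_or_ne j i with rfl | hj
  · simp
  · simp [mrg, Function.update_of_ne hj, Finset.mem_erase, hj]

/-- doubling up with dummy variables -/
lemma sum_mrg (s : Finset ι) (f : (∀ i, A i) → ℂ) :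
    ∑ x : ∀ i, A i, ∑ u : ∀ i, A i, f (mrg s x u)
      = (Fintype.card (∀ i, A i) : ℂ) * ∑ z : ∀ i, A i, f z := by
  classical
  have hinv : Function.Involutive
      (fun p : (∀ i, A i) × (∀ i, A i) => (mrg s p.1 p.2, mrg s p.2 p.1)) := by
    rintro ⟨x, u⟩
    have h1 : mrg s (mrg s x u) (mrg s u x) = x := by
      funext i; by_cases h : i ∈ s <;> simp [mrg, h]
    have h2 : mrg s (mrg s u x) (mrg s x u) = u := by
      funext i; by_cases h : i ∈ s <;> simp [mrg, h]
    simp only [h1, h2]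
  set ee := hinv.toPerm _ with hee
  calc ∑ x : ∀ i, A i, ∑ u : ∀ i, A i, f (mrg s x u)
      = ∑ p : (∀ i, A i) × (∀ i, A i), (fun p : (∀ i, A i) × (∀ i, A i) => f p.1) (ee p) := by
        rw [Fintype.sum_prod_type]; rfl
    _ = ∑ p : (∀ i, A i) × (∀ i, A i), f p.1 := by
        exact Equiv.sum_comp ee (fun p => f p.1)
    _ = ∑ x : ∀ i, A i, ∑ _u : ∀ i, A i, f x := by
        exact Fintype.sum_prod_type (f := fun p => f p.1)
    _ = (Fintype.card (∀ i, A i) : ℂ) * ∑ z : ∀ i, A i, f z := by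
        simp [Finset.sum_const, nsmul_eq_mul, Finset.mul_sum, mul_comm]

/-- positivity of character sums of a map additive in one coordinate -/
lemma sum_eChar_pi_nonneg (i : ι) (h : (∀ j, A j) → AddCircle (1:ℝ))
    (hadd : ∀ (x : ∀ j, A j) (a b : A i),
      h (Function.update x i (a + b)) = h (Function.update x i a) + h (Function.update x i b)) :
    (0:ℂ) ≤ ∑ x : ∀ j, A j, eChar (h x) := by
  have hc : (0:ℝ) < (Fintype.card (A i) : ℝ) := by exact_mod_cast Fintype.card_pos
  refine le_of_cmul_le hc ?_
  rw [mul_zero]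
  have : ((Fintype.card (A i) : ℝ) : ℂ) = ((Fintype.card (A i) : ℕ) : ℂ) := by push_cast; ring
  rw [this, ← sum_update i (fun x => eChar (h x))]
  refine Finset.sum_nonneg fun x _ => ?_
  exact sum_eChar_nonneg (fun a => h (Function.update x i a)) (hadd x)

end Pi

/-! ### mq lemmas -/

lemma addCircle_natCast_zero (n : ℕ) : (((n:ℝ)) : AddCircle (1:ℝ)) = 0 := by
  rw [AddCircle.coe_eq_zero_iff]; exact ⟨n, by simp⟩

lemma mq_zero_left (q : ℕ) [NeZero q] (d : ZMod q) : mq q 0 d = 0 := by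
  simp [mq]

lemma mq_zero_right (q : ℕ) [NeZero q] (c : ZMod q) : mq q c 0 = 0 := by
  simp [mq]

lemma mq_comm (q : ℕ) (c d : ZMod q) : mq q c d = mq q d c := by
  simp [mq, Nat.mul_comm]

lemma mq_add_right (q : ℕ) [NeZero q] (c d d' : ZMod q) :
    mq q c (d + d') = mq q c d + mq q c d' := by
  have hq : (q:ℝ) ≠ 0 := Nat.cast_ne_zero.mpr (NeZero.ne q)
  have hv : d.val + d'.val = q * ((d.val + d'.val) / q) + (d + d').val := by
    rw [ZMod.val_add]; exact (Nat.div_add_mod _ q).symm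
  have hn : c.val * d.val + c.val * d'.val
      = c.val * (d + d').val + q * (c.val * ((d.val + d'.val) / q)) := by
    calc c.val * d.val + c.val * d'.val = c.val * (d.val + d'.val) := by ring
      _ = c.val * (q * ((d.val + d'.val) / q) + (d + d').val) := by rw [← hv]
      _ = c.val * (d + d').val + q * (c.val * ((d.val + d'.val) / q)) := by ring
  rw [mq, mq, mq, ← AddCircle.coe_add, ← add_div]
  have hr : ((c.val * d.val:ℕ):ℝ) + ((c.val * d'.val:ℕ):ℝ)
      = ((c.val * (d + d').val:ℕ):ℝ) + (q:ℝ) * ((c.val * ((d.val + d'.val) / q):ℕ):ℝ) := by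
    push_cast
    exact_mod_cast congrArg (Nat.cast : ℕ → ℝ) hn
  rw [hr, add_div, mul_div_cancel_left₀ _ hq, AddCircle.coe_add, addCircle_natCast_zero, add_zero]

lemma mq_add_left (q : ℕ) [NeZero q] (c c' d : ZMod q) :
    mq q (c + c') d = mq q c d + mq q c' d := by
  rw [mq_comm, mq_add_right, mq_comm q d c, mq_comm q d c']

lemma mq_one_ne_zero {q : ℕ} (hq : 1 < q) {c : ZMod q} (hc : c ≠ 0) : mq q 1 c ≠ 0 := by
  haveI : NeZero q := ⟨by omega⟩
  haveI : Fact (1 < q) := ⟨hq⟩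
  haveI : Fact ((0:ℝ) < 1) := ⟨one_pos⟩
  rw [mq, ZMod.val_one q, one_mul]
  have h1 : (0:ℝ) ≤ (c.val:ℝ) / q := by positivity
  have h2 : (c.val:ℝ) / q < 1 := by
    rw [div_lt_one (by exact_mod_cast (by omega : 0 < q) : (0:ℝ) < q)]
    exact_mod_cast ZMod.val_lt c
  have h3 : (c.val:ℝ) / q ≠ 0 := by
    have : 0 < c.val := Nat.pos_of_ne_zero (fun h0 => hc ((ZMod.val_eq_zero c).mp h0))
    positivity
  intro hcon
  exact h3 ((AddCircle.coe_eq_zero_iff_of_mem_Ico (Set.mem_Ico.mpr ⟨h1, by simpa using h2⟩)).mp hcon)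

/-- cancellation of a positive natural factor -/
lemma le_of_nmul_le {a b : ℂ} {n : ℕ} (hn : 0 < n) (h : (n:ℂ) * a ≤ (n:ℂ) * b) : a ≤ b := by
  refine le_of_cmul_le (show (0:ℝ) < (n:ℝ) by exact_mod_cast hn) ?_
  have e : ((n:ℝ):ℂ) = (n:ℂ) := by push_cast; ring
  rwa [e]

lemma nat_inv_nonneg (m : ℕ) : (0:ℂ) ≤ ((m:ℂ))⁻¹ := by
  rw [show ((m:ℕ):ℂ) = (((m:ℕ):ℝ):ℂ) by norm_cast, ← Complex.ofReal_inv]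
  exact_mod_cast inv_nonneg.mpr (Nat.cast_nonneg m)

lemma cdiv_helper {a b c : ℂ} {n : ℕ} (hn : 0 < n) (key : a * b ≤ (n:ℂ) * c) :
    (a/(n:ℂ)) * (b/(n:ℂ)) ≤ c/(n:ℂ) := by
  have hne : (n:ℂ) ≠ 0 := Nat.cast_ne_zero.mpr hn.ne'
  have hinv : (0:ℂ) ≤ ((n:ℂ)*(n:ℂ))⁻¹ := by
    rw [show ((n:ℂ)*(n:ℂ)) = (((n*n:ℕ)):ℂ) by push_cast; ring]
    exact nat_inv_nonneg _
  have e1 : a/(n:ℂ) * (b/(n:ℂ)) = (a*b) * ((n:ℂ)*(n:ℂ))⁻¹ := by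
    rw [div_mul_div_comm, div_eq_mul_inv]
  have e2 : c/(n:ℂ) = ((n:ℂ)*c) * ((n:ℂ)*(n:ℂ))⁻¹ := by
    field_simp
  rw [e1, e2]
  exact mul_le_mul_of_nonneg_right key hinv

section Subadd

variable {ι : Type} [Fintype ι] [DecidableEq ι] {A : ι → Type}
  [∀ i, AddCommGroup (A i)] [∀ i, Fintype (A i)]

theorem bias_mul_bias_le (T S : (∀ i, A i) → AddCircle (1:ℝ))
    (hT : IsMultiadditive T) (hS : IsMultiadditive S) :
    bias T * bias S ≤ bias (fun x => T x + S x) := by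
  classical
  set N := Fintype.card (∀ i, A i) with hNdef
  have hNpos : 0 < N := Fintype.card_pos
  set F : Finset ι → ℂ := fun s => ∑ x : ∀ i, A i, ∑ u : ∀ i, A i, ∑ v : ∀ i, A i,
      eChar (T (mrg s x u) + S (mrg s x v)) with hFdef
  have swap3 : ∀ (G : Type) [Fintype G] (f : G → (∀ i, A i) → (∀ i, A i) → ℂ),
      ∑ a : G, ∑ u : ∀ i, A i, ∑ v : ∀ i, A i, f a u v
        = ∑ u : ∀ i, A i, ∑ v : ∀ i, A i, ∑ a : G, f a u v := by
    intro G _ f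
    rw [Finset.sum_comm]
    exact Finset.sum_congr rfl fun u _ => Finset.sum_comm
  have hstep : ∀ s : Finset ι, ∀ i ∈ s, F (s.erase i) ≤ F s := by
    intro s i hi
    set c := Fintype.card (A i) with hcdef
    have hcpos : 0 < c := Fintype.card_pos
    set JT : (∀ j, A j) → ℂ := fun w => ∑ a : A i, eChar (T (Function.update w i a)) with hJT
    set JS : (∀ j, A j) → ℂ := fun w => ∑ a : A i, eChar (S (Function.update w i a)) with hJS
    set K : (∀ j, A j) → (∀ j, A j) → ℂ := fun w w' =>
      ∑ a : A i, eChar (T (Function.update w i a) + S (Function.update w' i a)) with hK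
    have hpoint : ∀ w w', JT w * JS w' ≤ (c:ℂ) * K w w' := by
      intro w w'
      have haddT : ∀ a b : A i, T (Function.update w i (a+b))
          = T (Function.update w i a) + T (Function.update w i b) := fun a b => hT i w a b
      have haddS : ∀ a b : A i, S (Function.update w' i (a+b))
          = S (Function.update w' i a) + S (Function.update w' i b) := fun a b => hS i w' a b
      have haddK : ∀ a b : A i,
          (T (Function.update w i (a+b)) + S (Function.update w' i (a+b)))
          = (T (Function.update w i a) + S (Function.update w' i a))
            + (T (Function.update w i b) + S (Function.update w' i b)) := by
        intro a b; rw [haddT, haddS]; abel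
      by_cases hTw : ∀ a : A i, T (Function.update w i a) = 0
      · by_cases hSw : ∀ a : A i, S (Function.update w' i a) = 0
        · have e1 : JT w = (c:ℂ) := sum_eChar_all_zero _ hTw
          have e2 : JS w' = (c:ℂ) := sum_eChar_all_zero _ hSw
          have e3 : K w w' = (c:ℂ) := sum_eChar_all_zero _ (fun a => by rw [hTw a, hSw a, add_zero])
          rw [e1, e2, e3]
        · have e2 : JS w' = 0 := sum_eChar_eq_zero _ haddS (by push_neg at hSw; exact hSw)
          rw [e2, mul_zero]
          exact mul_nonneg (by exact_mod_cast Nat.cast_nonneg c) (sum_eChar_nonneg _ haddK)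
      · have e1 : JT w = 0 := sum_eChar_eq_zero _ haddT (by push_neg at hTw; exact hTw)
        rw [e1, zero_mul]
        exact mul_nonneg (by exact_mod_cast Nat.cast_nonneg c) (sum_eChar_nonneg _ haddK)
    have hFs : (c:ℂ) * F s = ∑ x : ∀ i, A i, ∑ u : ∀ i, A i, ∑ v : ∀ i, A i,
        K (mrg s x u) (mrg s x v) := by
      rw [hFdef]
      dsimp only
      rw [← sum_update i (fun x => ∑ u : ∀ i, A i, ∑ v : ∀ i, A i,
        eChar (T (mrg s x u) + S (mrg s x v)))]
      refine Finset.sum_congr rfl fun x _ => ?_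
      rw [swap3 (A i) (fun a u v => eChar (T (mrg s (Function.update x i a) u)
        + S (mrg s (Function.update x i a) v)))]
      refine Finset.sum_congr rfl fun u _ => Finset.sum_congr rfl fun v _ => ?_
      rw [hK]
      refine Finset.sum_congr rfl fun a _ => ?_
      rw [mrg_update_left hi, mrg_update_left hi]
    have hie : i ∉ s.erase i := fun h => (Finset.mem_erase.mp h).1 rfl
    have hPT : ∀ x : ∀ i, A i, (c:ℂ) * ∑ u : ∀ i, A i, eChar (T (mrg (s.erase i) x u))
        = ∑ u : ∀ i, A i, JT (mrg s x u) := by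
      intro x
      rw [← sum_update i (fun u => eChar (T (mrg (s.erase i) x u)))]
      refine Finset.sum_congr rfl fun u _ => ?_
      rw [hJT]
      refine Finset.sum_congr rfl fun a _ => ?_
      rw [mrg_update_right hie, update_mrg_erase hi]
    have hPS : ∀ x : ∀ i, A i, (c:ℂ) * ∑ v : ∀ i, A i, eChar (S (mrg (s.erase i) x v))
        = ∑ v : ∀ i, A i, JS (mrg s x v) := by
      intro x
      rw [← sum_update i (fun v => eChar (S (mrg (s.erase i) x v)))]
      refine Finset.sum_congr rfl fun v _ => ?_
      rw [hJS]
      refine Finset.sum_congr rfl fun a _ => ?_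
      rw [mrg_update_right hie, update_mrg_erase hi]
    have hF' : F (s.erase i) = ∑ x : ∀ i, A i,
        (∑ u : ∀ i, A i, eChar (T (mrg (s.erase i) x u)))
          * (∑ v : ∀ i, A i, eChar (S (mrg (s.erase i) x v))) := by
      rw [hFdef]
      dsimp only
      refine Finset.sum_congr rfl fun x _ => ?_
      rw [Finset.sum_mul_sum]
      exact Finset.sum_congr rfl fun u _ => Finset.sum_congr rfl fun v _ => eChar_add _ _
    have hFs' : (c:ℂ) * ((c:ℂ) * F (s.erase i)) = ∑ x : ∀ i, A i, ∑ u : ∀ i, A i, ∑ v : ∀ i, A i,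
        JT (mrg s x u) * JS (mrg s x v) := by
      rw [hF', Finset.mul_sum, Finset.mul_sum]
      calc ∑ x : ∀ i, A i, (c:ℂ) * ((c:ℂ) *
            ((∑ u : ∀ i, A i, eChar (T (mrg (s.erase i) x u)))
              * (∑ v : ∀ i, A i, eChar (S (mrg (s.erase i) x v)))))
          = ∑ x : ∀ i, A i, ((c:ℂ) * ∑ u : ∀ i, A i, eChar (T (mrg (s.erase i) x u)))
              * ((c:ℂ) * ∑ v : ∀ i, A i, eChar (S (mrg (s.erase i) x v))) := by
            exact Finset.sum_congr rfl fun x _ => by ring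
        _ = ∑ x : ∀ i, A i, (∑ u : ∀ i, A i, JT (mrg s x u)) * (∑ v : ∀ i, A i, JS (mrg s x v)) := by
            exact Finset.sum_congr rfl fun x _ => by rw [hPT x, hPS x]
        _ = ∑ x : ∀ i, A i, ∑ u : ∀ i, A i, ∑ v : ∀ i, A i, JT (mrg s x u) * JS (mrg s x v) := by
            exact Finset.sum_congr rfl fun x _ => Finset.sum_mul_sum _ _ _ _
    have hmain : (c:ℂ) * ((c:ℂ) * F (s.erase i)) ≤ (c:ℂ) * ((c:ℂ) * F s) := by
      rw [hFs']
      calc ∑ x : ∀ i, A i, ∑ u : ∀ i, A i, ∑ v : ∀ i, A i, JT (mrg s x u) * JS (mrg s x v)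
          ≤ ∑ x : ∀ i, A i, ∑ u : ∀ i, A i, ∑ v : ∀ i, A i, (c:ℂ) * K (mrg s x u) (mrg s x v) :=
            Finset.sum_le_sum fun x _ => Finset.sum_le_sum fun u _ =>
              Finset.sum_le_sum fun v _ => hpoint _ _
        _ = (c:ℂ) * ∑ x : ∀ i, A i, ∑ u : ∀ i, A i, ∑ v : ∀ i, A i,
              K (mrg s x u) (mrg s x v) := by
            simp_rw [← Finset.mul_sum]
        _ = (c:ℂ) * ((c:ℂ) * F s) := by rw [hFs]
    exact le_of_nmul_le hcpos (le_of_nmul_le hcpos hmain)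
  have hchain : ∀ s : Finset ι, F ∅ ≤ F s := by
    intro s
    induction s using Finset.induction_on with
    | empty => exact le_refl _
    | @insert i t hit ih =>
      have h2 := hstep (insert i t) i (Finset.mem_insert_self i t)
      rw [Finset.erase_insert hit] at h2
      exact le_trans ih h2
  have hconst2 : ∀ z : ℂ, (∑ _u : ∀ i, A i, ∑ _v : ∀ i, A i, z) = (N:ℂ) * ((N:ℂ) * z) := by
    intro z
    simp only [Finset.sum_const, Finset.card_univ, nsmul_eq_mul, hNdef]
  have huniv : F Finset.univ = (N:ℂ) * ((N:ℂ) * ∑ x : ∀ i, A i, eChar (T x + S x)) := by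
    rw [hFdef]
    dsimp only
    calc (∑ x : ∀ i, A i, ∑ _u : ∀ i, A i, ∑ _v : ∀ i, A i,
        eChar (T (mrg Finset.univ x _u) + S (mrg Finset.univ x _v)))
        = ∑ x : ∀ i, A i, (N:ℂ) * ((N:ℂ) * eChar (T x + S x)) := by
          refine Finset.sum_congr rfl fun x _ => ?_
          rw [← hconst2 (eChar (T x + S x))]
          refine Finset.sum_congr rfl fun u _ => Finset.sum_congr rfl fun v _ => ?_
          rw [mrg_univ, mrg_univ]
      _ = (N:ℂ) * ((N:ℂ) * ∑ x : ∀ i, A i, eChar (T x + S x)) := by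
          rw [← Finset.mul_sum, ← Finset.mul_sum]
  have hempty : F ∅ = (N:ℂ) * ((∑ u : ∀ i, A i, eChar (T u)) * (∑ v : ∀ i, A i, eChar (S v))) := by
    rw [hFdef]
    dsimp only
    calc (∑ x : ∀ i, A i, ∑ u : ∀ i, A i, ∑ v : ∀ i, A i,
        eChar (T (mrg ∅ x u) + S (mrg ∅ x v)))
        = ∑ _x : ∀ i, A i, ((∑ u : ∀ i, A i, eChar (T u)) * (∑ v : ∀ i, A i, eChar (S v))) := by
          refine Finset.sum_congr rfl fun x _ => ?_
          rw [Finset.sum_mul_sum]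
          refine Finset.sum_congr rfl fun u _ => Finset.sum_congr rfl fun v _ => ?_
          rw [mrg_empty, mrg_empty, eChar_add]
      _ = (N:ℂ) * ((∑ u : ∀ i, A i, eChar (T u)) * (∑ v : ∀ i, A i, eChar (S v))) := by
          simp only [Finset.sum_const, Finset.card_univ, nsmul_eq_mul, hNdef]
  have key : (∑ u : ∀ i, A i, eChar (T u)) * (∑ v : ∀ i, A i, eChar (S v))
      ≤ (N:ℂ) * ∑ x : ∀ i, A i, eChar (T x + S x) := by
    refine le_of_nmul_le hNpos ?_
    rw [← hempty, ← huniv]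
    exact hchain Finset.univ
  rw [bias, bias, bias, ← hNdef]
  exact cdiv_helper hNpos key

end Subadd

section Factored

variable {ι : Type} [Fintype ι] [DecidableEq ι] {A : ι → Type}
  [∀ i, AddCommGroup (A i)] [∀ i, Fintype (A i)]

lemma restrict_update (s : Finset ι) (j : ι) (hj : j ∈ s) (x : ∀ i, A i) (a : A j) :
    (fun i : ↥s => Function.update x j a (i:ι))
      = Function.update (fun i : ↥s => x i) (⟨j, hj⟩ : ↥s) a := by
  funext k
  rcases eq_or_ne k (⟨j, hj⟩ : ↥s) with rfl | hk
  · simp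
  · have hkj : (k:ι) ≠ j := fun h => hk (Subtype.ext h)
    rw [Function.update_of_ne hkj, Function.update_of_ne hk]

lemma inv_le_div_of_le {n q : ℕ} (hn : 0 < n) (hq : 0 < q) {z : ℂ}
    (h : (n:ℂ) ≤ (q:ℂ) * z) : (((q:ℝ))⁻¹ : ℂ) ≤ z / (n:ℂ) := by
  have hn0 : ((n:ℝ)) ≠ 0 := by exact_mod_cast hn.ne'
  have hq0 : ((q:ℝ)) ≠ 0 := by exact_mod_cast hq.ne'
  have hpos : (0:ℝ) < (q:ℝ) * (n:ℝ) := by positivity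
  refine le_of_cmul_le hpos ?_
  have e1 : (((q:ℝ) * (n:ℝ) : ℝ):ℂ) * (((q:ℝ))⁻¹ : ℂ) = (n:ℂ) := by
    push_cast
    field_simp
  have e2 : (((q:ℝ) * (n:ℝ) : ℝ):ℂ) * (z / (n:ℂ)) = (q:ℂ) * z := by
    have hn0' : (n:ℂ) ≠ 0 := by exact_mod_cast hn.ne'
    push_cast
    field_simp
  rw [e1, e2]
  exact h

theorem bias_factored {q : ℕ} (hq : 1 < q) {ψ : (∀ i, A i) → AddCircle (1:ℝ)}
    (h : FactorsThroughMq q ψ) : (((q:ℝ))⁻¹ : ℂ) ≤ bias ψ := by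
  classical
  haveI : NeZero q := ⟨by omega⟩
  obtain ⟨I, hIne, hIuniv, φ₁, φ₂, h1, h2, heq⟩ := h
  obtain ⟨i₂, hi₂⟩ := hIne
  obtain ⟨i₁, hi₁⟩ : ∃ i, i ∉ I := by
    by_contra hcon
    push_neg at hcon
    exact hIuniv (Finset.eq_univ_iff_forall.mpr hcon)
  have hi₁c : i₁ ∈ Iᶜ := Finset.mem_compl.mpr hi₁
  set N := Fintype.card (∀ i, A i) with hNdef
  have hNpos : 0 < N := Fintype.card_pos
  set f : (∀ i, A i) → ZMod q := fun x => φ₁ (fun i => x i) with hfdef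
  set g : (∀ i, A i) → ZMod q := fun u => φ₂ (fun i => u i) with hgdef
  -- additivity of f in coordinate i₂ and of g in coordinate i₁
  have hfadd : ∀ (x : ∀ i, A i) (a b : A i₂),
      f (Function.update x i₂ (a + b)) = f (Function.update x i₂ a) + f (Function.update x i₂ b) := by
    intro x a b
    simp only [hfdef]
    rw [restrict_update I i₂ hi₂, restrict_update I i₂ hi₂, restrict_update I i₂ hi₂]
    exact h1 ⟨i₂, hi₂⟩ (fun i => x i) a b
  have hgadd : ∀ (u : ∀ i, A i) (a b : A i₁),
      g (Function.update u i₁ (a + b)) = g (Function.update u i₁ a) + g (Function.update u i₁ b) := by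
    intro u a b
    simp only [hgdef]
    rw [restrict_update Iᶜ i₁ hi₁c, restrict_update Iᶜ i₁ hi₁c, restrict_update Iᶜ i₁ hi₁c]
    exact h2 ⟨i₁, hi₁c⟩ (fun i => u i) a b
  -- the merged evaluation
  have hmerge : ∀ (x u : ∀ i, A i), ψ (mrg I x u) = mq q (f x) (g u) := by
    intro x u
    rw [heq (mrg I x u)]
    congr 1
    · congr 1
      funext i
      simp [mrg, i.2]
    · congr 1
      funext i
      have : (i:ι) ∉ I := Finset.mem_compl.mp i.2
      simp [mrg, this]
  set M := (Finset.univ.filter (fun x : ∀ i, A i => f x = 0)).card with hMdef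
  -- counting estimate : N ≤ q * M
  have hcount : (N:ℂ) ≤ (q:ℂ) * (M:ℂ) := by
    have hqM : ∑ t : ZMod q, ∑ x : ∀ i, A i, eChar (mq q t (f x)) = (q:ℂ) * (M:ℂ) := by
      rw [Finset.sum_comm]
      have hx : ∀ x : ∀ i, A i, ∑ t : ZMod q, eChar (mq q t (f x))
          = if f x = 0 then (q:ℂ) else 0 := by
        intro x
        by_cases hfx : f x = 0
        · rw [if_pos hfx]
          have := sum_eChar_all_zero (fun t : ZMod q => mq q t (f x))
            (fun t => by show mq q t (f x) = 0; rw [hfx]; exact mq_zero_right q t)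
          rwa [ZMod.card] at this
        · rw [if_neg hfx]
          refine sum_eChar_eq_zero _ (fun t t' => mq_add_left q t t' (f x)) ⟨1, ?_⟩
          exact mq_one_ne_zero hq hfx
      simp_rw [hx]
      rw [Finset.sum_ite, Finset.sum_const_zero, add_zero, Finset.sum_const, nsmul_eq_mul,
        hMdef, mul_comm]
    rw [← hqM]
    have hterm0 : ∑ x : ∀ i, A i, eChar (mq q (0 : ZMod q) (f x)) = (N:ℂ) := by
      have := sum_eChar_all_zero (fun x : ∀ i, A i => mq q (0 : ZMod q) (f x))
        (fun x => mq_zero_left q (f x))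
      rw [hNdef]
      exact this
    calc (N:ℂ) = ∑ x : ∀ i, A i, eChar (mq q (0 : ZMod q) (f x)) := hterm0.symm
      _ ≤ ∑ t : ZMod q, ∑ x : ∀ i, A i, eChar (mq q t (f x)) := by
          refine Finset.single_le_sum (f := fun t : ZMod q => ∑ x : ∀ i, A i, eChar (mq q t (f x)))
            (fun t _ => ?_) (Finset.mem_univ (0 : ZMod q))
          refine sum_eChar_pi_nonneg i₂ (fun x => mq q t (f x)) (fun x a b => ?_)
          show mq q t (f (Function.update x i₂ (a + b)))
            = mq q t (f (Function.update x i₂ a)) + mq q t (f (Function.update x i₂ b))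
          rw [hfadd, mq_add_right]
  -- main estimate : N * M ≤ N * Σψ
  have hmain : (N:ℂ) * (M:ℂ) ≤ (N:ℂ) * ∑ z : ∀ i, A i, eChar (ψ z) := by
    rw [← sum_mrg I (fun z => eChar (ψ z))]
    have hpt : ∀ x : ∀ i, A i, (if f x = 0 then (N:ℂ) else 0)
        ≤ ∑ u : ∀ i, A i, eChar (ψ (mrg I x u)) := by
      intro x
      by_cases hfx : f x = 0
      · rw [if_pos hfx]
        refine le_of_eq ?_
        have : ∀ u : ∀ i, A i, eChar (ψ (mrg I x u)) = 1 := by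
          intro u
          rw [hmerge, hfx, mq_zero_left, eChar_zero]
        simp only [this, Finset.sum_const, Finset.card_univ, nsmul_eq_mul, mul_one, hNdef]
      · rw [if_neg hfx]
        refine sum_eChar_pi_nonneg i₁ (fun u => ψ (mrg I x u)) (fun u a b => ?_)
        show ψ (mrg I x (Function.update u i₁ (a + b)))
          = ψ (mrg I x (Function.update u i₁ a)) + ψ (mrg I x (Function.update u i₁ b))
        rw [hmerge, hmerge, hmerge, hgadd, mq_add_right]
    have hNM : (N:ℂ) * (M:ℂ) = ∑ x : ∀ i, A i, (if f x = 0 then (N:ℂ) else 0) := by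
      rw [Finset.sum_ite, Finset.sum_const_zero, add_zero, Finset.sum_const, nsmul_eq_mul,
        hMdef, mul_comm]
    calc (N:ℂ) * (M:ℂ) = ∑ x : ∀ i, A i, (if f x = 0 then (N:ℂ) else 0) := hNM
      _ ≤ ∑ x : ∀ i, A i, ∑ u : ∀ i, A i, eChar (ψ (mrg I x u)) :=
        Finset.sum_le_sum fun x _ => hpt x
  have hMle : (M:ℂ) ≤ ∑ z : ∀ i, A i, eChar (ψ z) := le_of_nmul_le hNpos hmain
  have hfinal : (N:ℂ) ≤ (q:ℂ) * ∑ z : ∀ i, A i, eChar (ψ z) := by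
    refine le_trans hcount (mul_le_mul_of_nonneg_left hMle ?_)
    exact_mod_cast Nat.cast_nonneg q
  rw [bias, ← hNdef]
  exact inv_le_div_of_le hNpos (by omega) hfinal

end Factored

section Main

variable {ι : Type} [Fintype ι] [DecidableEq ι] {A : ι → Type}
  [∀ i, AddCommGroup (A i)] [∀ i, Fintype (A i)]

lemma isMultiadditive_sum {r : ℕ} (ψ : Fin r → ((∀ i, A i) → AddCircle (1:ℝ)))
    (hψ : ∀ j, IsMultiadditive (ψ j)) (t : Finset (Fin r)) :
    IsMultiadditive (fun x => ∑ j ∈ t, ψ j x) := by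
  intro i x a b
  rw [← Finset.sum_add_distrib]
  exact Finset.sum_congr rfl fun j _ => hψ j i x a b

lemma bias_zero_map : bias (fun _ : ∀ i, A i => (0 : AddCircle (1:ℝ))) = 1 := by
  rw [bias]
  have h0 : (Fintype.card (∀ i, A i) : ℂ) ≠ 0 := by
    exact_mod_cast (Fintype.card_pos (α := ∀ i, A i)).ne'
  have hs : (∑ x : ∀ i, A i, eChar ((fun _ : ∀ i, A i => (0:AddCircle (1:ℝ))) x))
      = (Fintype.card (∀ i, A i) : ℂ) := by
    simp only [eChar_zero, Finset.sum_const, Finset.card_univ, nsmul_eq_mul, mul_one]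
  rw [hs, div_self h0]

theorem bias_ge_of_low_rank' (r : ℕ)
    (ψ : Fin r → ((∀ i, A i) → AddCircle (1:ℝ))) (hψ : ∀ j, IsMultiadditive (ψ j))
    (q : Fin r → ℕ) (hq : ∀ j, IsPrimePow (q j))
    (hfac : ∀ j, FactorsThroughMq (q j) (ψ j)) (s : Finset (Fin r)) :
    ((∏ j ∈ s, ((q j : ℝ))⁻¹ : ℝ) : ℂ) ≤ bias (fun x => ∑ j ∈ s, ψ j x) := by
  classical
  induction s using Finset.induction_on with
  | empty =>
    simp only [Finset.prod_empty, Finset.sum_empty]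
    rw [bias_zero_map]
    norm_num
  | @insert a t hat ih =>
    have hqa1 : 1 < q a := (hq a).one_lt
    have hba : (((q a : ℝ))⁻¹ : ℂ) ≤ bias (ψ a) := bias_factored hqa1 (hfac a)
    have hsub := bias_mul_bias_le (ψ a) (fun x => ∑ j ∈ t, ψ j x) (hψ a)
      (isMultiadditive_sum ψ hψ t)
    have heqf : (fun x => ψ a x + ∑ j ∈ t, ψ j x) = (fun x : ∀ i, A i => ∑ j ∈ insert a t, ψ j x) := by
      funext x
      rw [Finset.sum_insert hat]
    rw [heqf] at hsub
    have h0t : (0:ℂ) ≤ ((∏ j ∈ t, ((q j : ℝ))⁻¹ : ℝ) : ℂ) := by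
      have : (0:ℝ) ≤ (∏ j ∈ t, ((q j : ℝ))⁻¹ : ℝ) :=
        Finset.prod_nonneg fun j _ => by positivity
      exact_mod_cast this
    have h0a : (0:ℂ) ≤ bias (ψ a) := by
      refine le_trans ?_ hba
      have : (0:ℝ) ≤ ((q a : ℝ))⁻¹ := by positivity
      exact_mod_cast this
    have hcast : ((∏ j ∈ insert a t, ((q j : ℝ))⁻¹ : ℝ) : ℂ)
        = (((q a : ℝ))⁻¹ : ℂ) * ((∏ j ∈ t, ((q j : ℝ))⁻¹ : ℝ) : ℂ) := by
      rw [Finset.prod_insert hat]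
      push_cast
      ring
    calc ((∏ j ∈ insert a t, ((q j : ℝ))⁻¹ : ℝ) : ℂ)
        = (((q a : ℝ))⁻¹ : ℂ) * ((∏ j ∈ t, ((q j : ℝ))⁻¹ : ℝ) : ℂ) := hcast
      _ ≤ bias (ψ a) * bias (fun x => ∑ j ∈ t, ψ j x) := mul_le_mul hba ih h0t h0a
      _ ≤ bias (fun x : ∀ i, A i => ∑ j ∈ insert a t, ψ j x) := hsub

end Main


/-- If the multilinear map `φ` is the sum of multilinear maps `φ_1, …, φ_r`, where `φ_i` factors
through `m_{q_i}` for a prime power `q_i`, then `bias(φ) ≥ q_1⁻¹ ⋯ q_r⁻¹`. -/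
theorem bias_ge_of_low_rank (k r : ℕ) (A : Fin k → Type) [∀ i, AddCommGroup (A i)]
    [∀ i, Fintype (A i)] (φ : (∀ i, A i) → AddCircle (1 : ℝ)) (hφ : IsMultiadditive φ)
    (ψ : Fin r → ((∀ i, A i) → AddCircle (1 : ℝ))) (hψ : ∀ j, IsMultiadditive (ψ j))
    (q : Fin r → ℕ) (hq : ∀ j, IsPrimePow (q j))
    (hfac : ∀ j, FactorsThroughMq (q j) (ψ j))
    (hsum : ∀ x, φ x = ∑ j, ψ j x) :
    ((∏ j, ((q j : ℝ))⁻¹ : ℝ) : ℂ) ≤ bias φ := by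
  have h := bias_ge_of_low_rank' r ψ hψ q hq hfac Finset.univ
  have hb : bias (fun x => ∑ j ∈ Finset.univ, ψ j x) = bias φ := by
    rw [bias, bias]
    congr 1
    exact Finset.sum_congr rfl fun x _ => by rw [hsum x]
  rwa [hb] at h
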